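/- For any k > 0, the power-sum function f(κ) = n^{-1/k} (Σᵢ κᵢ^k)^{1/k} on Γ₊ satisfies: (i) f is positive, symmetric, homogeneous of degree 1, strictly increasing, with f(1,...,1)=1; (ii) (∂f/∂κᵢ·κᵢ - ∂f/∂κⱼ·κⱼ)(κᵢ-κⱼ) ≥ 0 for all i≠j; (iii) Σ_{i,j}(∂²log f/∂κᵢ∂κⱼ)yᵢyⱼ + Σᵢ κᵢ⁻¹(∂log f/∂κᵢ)yᵢ² ≥ 0 for all y ∈ ℝⁿ. -/

import Mathlib

open Real

private noncomputable def LS (n : ℕ) (k : ℝ) (κ : Fin n → ℝ) : (Fin n → ℝ) →L[ℝ] ℝ :=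
  ∑ i, (k * κ i ^ (k - 1)) • ContinuousLinearMap.proj i

private lemma LS_apply (n : ℕ) (k : ℝ) (κ : Fin n → ℝ) (j : Fin n) :
    LS n k κ (Pi.single j 1) = k * κ j ^ (k - 1) := by
  simp [LS, ContinuousLinearMap.sum_apply, Pi.single_apply]

private lemma hasFDerivAt_proj (n : ℕ) (i : Fin n) (κ : Fin n → ℝ) :
    HasFDerivAt (fun κ' : Fin n → ℝ => κ' i)
      (ContinuousLinearMap.proj (R := ℝ) (φ := fun _ : Fin n => ℝ) i) κ :=
  (ContinuousLinearMap.proj (R := ℝ) (φ := fun _ : Fin n => ℝ) i).hasFDerivAt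

private lemma hasFDerivAt_S (n : ℕ) (k : ℝ) (κ : Fin n → ℝ) (hκ : ∀ i, 0 < κ i) :
    HasFDerivAt (fun κ' : Fin n → ℝ => ∑ i, κ' i ^ k) (LS n k κ) κ := by
  apply HasFDerivAt.fun_sum
  intro i _
  have h1 : HasDerivAt (fun x : ℝ => x ^ k) (k * κ i ^ (k - 1)) (κ i) :=
    Real.hasDerivAt_rpow_const (Or.inl (hκ i).ne')
  exact h1.comp_hasFDerivAt κ (hasFDerivAt_proj n i κ)

private lemma hasFDerivAt_f (n : ℕ) (k : ℝ) (κ : Fin n → ℝ)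
    (hκ : ∀ i, 0 < κ i) (hS : 0 < ∑ i, κ i ^ k) :
    HasFDerivAt (fun κ' : Fin n → ℝ => (n : ℝ) ^ (-(1 / k)) * (∑ i, κ' i ^ k) ^ (1 / k))
      (((n : ℝ) ^ (-(1 / k)) * ((1 / k) * (∑ i, κ i ^ k) ^ (1 / k - 1))) • LS n k κ) κ := by
  have h1 : HasDerivAt (fun x : ℝ => (n : ℝ) ^ (-(1 / k)) * x ^ (1 / k))
      ((n : ℝ) ^ (-(1 / k)) * ((1 / k) * (∑ i, κ i ^ k) ^ (1 / k - 1))) (∑ i, κ i ^ k) :=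
    (Real.hasDerivAt_rpow_const (Or.inl hS.ne')).const_mul _
  have h2 := h1.comp_hasFDerivAt κ (hasFDerivAt_S n k κ hκ)
  exact h2

/-- For any `k > 0`, the power-sum function `f(κ) = n^{-1/k} (∑ᵢ κᵢ^k)^{1/k}`
on `Γ₊` is (i) positive, symmetric, homogeneous of degree one, strictly
increasing, and normalized with `f(1,…,1) = 1`; and satisfies
(ii) `(∂f/∂κᵢ κᵢ - ∂f/∂κⱼ κⱼ)(κᵢ - κⱼ) ≥ 0` for `i ≠ j`, and
(iii) `∑_{i,j}(∂² log f/∂κᵢ∂κⱼ) yᵢyⱼ + ∑ᵢ κᵢ⁻¹ (∂ log f/∂κᵢ) yᵢ² ≥ 0`. -/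
theorem stmt6 (n : ℕ) (hn : 0 < n) (k : ℝ) (hk : 0 < k)
    (f : (Fin n → ℝ) → ℝ)
    (hfdef : ∀ κ : Fin n → ℝ,
      f κ = (n : ℝ) ^ (-(1 / k)) * (∑ i, κ i ^ k) ^ (1 / k)) :
    (∀ κ ∈ {κ : Fin n → ℝ | ∀ i, 0 < κ i}, 0 < f κ) ∧
    (∀ (κ : Fin n → ℝ) (σ : Equiv.Perm (Fin n)), f (κ ∘ σ) = f κ) ∧
    (∀ κ ∈ {κ : Fin n → ℝ | ∀ i, 0 < κ i}, ∀ c : ℝ, 0 < c →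
      f (c • κ) = c * f κ) ∧
    (∀ κ ∈ {κ : Fin n → ℝ | ∀ i, 0 < κ i}, ∀ i,
      0 < fderiv ℝ f κ (Pi.single i 1)) ∧
    f (fun _ => 1) = 1 ∧
    (∀ κ ∈ {κ : Fin n → ℝ | ∀ i, 0 < κ i}, ∀ i j : Fin n, i ≠ j →
      0 ≤ (fderiv ℝ f κ (Pi.single i 1) * κ i - fderiv ℝ f κ (Pi.single j 1) * κ j) *
          (κ i - κ j)) ∧
    (∀ κ ∈ {κ : Fin n → ℝ | ∀ i, 0 < κ i}, ∀ y : Fin n → ℝ,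
      0 ≤ (∑ i, ∑ j,
          (fderiv ℝ (fun κ' => fderiv ℝ (fun κ'' => Real.log (f κ'')) κ'
            (Pi.single i 1)) κ (Pi.single j 1)) * y i * y j)
        + ∑ i, (κ i)⁻¹ *
            fderiv ℝ (fun κ'' => Real.log (f κ'')) κ (Pi.single i 1) * (y i) ^ 2) := by
  have hn0 : (0 : ℝ) < n := Nat.cast_pos.mpr hn
  haveI : Nonempty (Fin n) := Fin.pos_iff_nonempty.mp hn
  have hcpos : 0 < (n : ℝ) ^ (-(1 / k)) := Real.rpow_pos_of_pos hn0 _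
  have hk' : k ≠ 0 := hk.ne'
  have hfe : f = fun κ' : Fin n → ℝ => (n : ℝ) ^ (-(1 / k)) * (∑ i, κ' i ^ k) ^ (1 / k) :=
    funext hfdef
  have hSpos : ∀ κ : Fin n → ℝ, (∀ i, 0 < κ i) → 0 < ∑ i, κ i ^ k := fun κ hκ =>
    Finset.sum_pos (fun i _ => Real.rpow_pos_of_pos (hκ i) k) Finset.univ_nonempty
  have hfpos : ∀ κ : Fin n → ℝ, (∀ i, 0 < κ i) → 0 < f κ := fun κ hκ => by
    rw [hfdef]
    exact mul_pos hcpos (Real.rpow_pos_of_pos (hSpos κ hκ) _)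
  have hUopen : IsOpen {κ : Fin n → ℝ | ∀ i, 0 < κ i} := by
    have : {κ : Fin n → ℝ | ∀ i, 0 < κ i} = Set.pi Set.univ (fun _ => Set.Ioi 0) := by
      ext κ; simp [Set.mem_pi]
    rw [this]
    exact isOpen_set_pi Set.finite_univ (fun _ _ => isOpen_Ioi)
  -- first derivatives of f
  have hDf : ∀ κ : Fin n → ℝ, (∀ i, 0 < κ i) → ∀ i, fderiv ℝ f κ (Pi.single i 1)
      = (n : ℝ) ^ (-(1 / k)) * (∑ j, κ j ^ k) ^ (1 / k - 1) * κ i ^ (k - 1) := by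
    intro κ hκ i
    have hF := hasFDerivAt_f n k κ hκ (hSpos κ hκ)
    rw [hfe, hF.fderiv, ContinuousLinearMap.smul_apply, LS_apply]
    simp only [smul_eq_mul]
    field_simp
  -- first derivatives of log ∘ f
  have hlog : ∀ κ : Fin n → ℝ, (∀ i, 0 < κ i) → ∀ i,
      fderiv ℝ (fun κ'' => Real.log (f κ'')) κ (Pi.single i 1)
      = κ i ^ (k - 1) * (∑ j, κ j ^ k)⁻¹ := by
    intro κ hκ i
    have hS := hSpos κ hκ
    have hF := hasFDerivAt_f n k κ hκ hS
    have hFf : HasFDerivAt f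
        (((n : ℝ) ^ (-(1 / k)) * ((1 / k) * (∑ j, κ j ^ k) ^ (1 / k - 1))) • LS n k κ) κ := by
      rw [hfe]; exact hF
    have hL : HasDerivAt Real.log (f κ)⁻¹ (f κ) := Real.hasDerivAt_log (hfpos κ hκ).ne'
    have hcomp := hL.comp_hasFDerivAt κ hFf
    have heq : fderiv ℝ (fun κ'' => Real.log (f κ'')) κ
        = (f κ)⁻¹ • (((n : ℝ) ^ (-(1 / k)) * ((1 / k) * (∑ j, κ j ^ k) ^ (1 / k - 1)))
            • LS n k κ) := hcomp.fderiv
    rw [heq, ContinuousLinearMap.smul_apply, ContinuousLinearMap.smul_apply, LS_apply]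
    simp only [smul_eq_mul]
    rw [hfdef κ, show (1 / k - 1 : ℝ) = 1 / k + (-1) by ring, Real.rpow_add hS,
      Real.rpow_neg_one]
    have h1 : ((∑ j, κ j ^ k) ^ (1 / k) : ℝ) ≠ 0 := (Real.rpow_pos_of_pos hS _).ne'
    field_simp
  -- second derivatives of log ∘ f
  have hD2 : ∀ κ : Fin n → ℝ, (∀ i, 0 < κ i) → ∀ i j,
      fderiv ℝ (fun κ' => fderiv ℝ (fun κ'' => Real.log (f κ'')) κ' (Pi.single i 1)) κ
        (Pi.single j 1)
      = κ i ^ (k - 1) * (-(((∑ l, κ l ^ k) ^ 2)⁻¹) * (k * κ j ^ (k - 1)))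
        + (∑ l, κ l ^ k)⁻¹ * ((k - 1) * κ i ^ (k - 2) * (if i = j then (1:ℝ) else 0)) := by
    intro κ hκ i j
    have hS := hSpos κ hκ
    have hev : (fun κ' => fderiv ℝ (fun κ'' => Real.log (f κ'')) κ' (Pi.single i 1))
        =ᶠ[nhds κ] (fun κ' => κ' i ^ (k - 1) * (∑ l, κ' l ^ k)⁻¹) := by
      filter_upwards [hUopen.mem_nhds hκ] with κ' hκ'
      exact hlog κ' hκ' i
    have hfd := Filter.EventuallyEq.fderiv_eq (𝕜 := ℝ) hev
    rw [hfd]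
    have hu : HasFDerivAt (fun κ' : Fin n → ℝ => κ' i ^ (k - 1))
        (((k - 1) * κ i ^ (k - 1 - 1)) •
          ContinuousLinearMap.proj (R := ℝ) (φ := fun _ : Fin n => ℝ) i) κ := by
      have h1 : HasDerivAt (fun x : ℝ => x ^ (k - 1)) ((k - 1) * κ i ^ (k - 1 - 1)) (κ i) :=
        Real.hasDerivAt_rpow_const (Or.inl (hκ i).ne')
      exact h1.comp_hasFDerivAt κ (hasFDerivAt_proj n i κ)
    have hv : HasFDerivAt (fun κ' : Fin n → ℝ => (∑ l, κ' l ^ k)⁻¹)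
        ((-(((∑ l, κ l ^ k) ^ 2)⁻¹)) • LS n k κ) κ := by
      have h1 : HasDerivAt (fun x : ℝ => x⁻¹) (-(((∑ l, κ l ^ k) ^ 2)⁻¹)) (∑ l, κ l ^ k) :=
        hasDerivAt_inv hS.ne'
      exact h1.comp_hasFDerivAt κ (hasFDerivAt_S n k κ hκ)
    rw [(hu.fun_mul hv).fderiv]
    simp only [ContinuousLinearMap.add_apply, ContinuousLinearMap.coe_smul', Pi.smul_apply,
      ContinuousLinearMap.smul_apply, smul_eq_mul, LS_apply,
      ContinuousLinearMap.proj_apply, Pi.single_apply]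
    rw [show (k - 1 - 1 : ℝ) = k - 2 by ring]
  refine ⟨fun κ hκ => hfpos κ hκ, ?_, ?_, ?_, ?_, ?_, ?_⟩
  · -- symmetry
    intro κ σ
    rw [hfdef, hfdef]
    congr 2
    exact Equiv.sum_comp σ (fun i => κ i ^ k)
  · -- homogeneity
    intro κ hκ d hd
    rw [hfdef, hfdef]
    have h1 : ∑ i, (d • κ) i ^ k = d ^ k * ∑ i, κ i ^ k := by
      rw [Finset.mul_sum]
      refine Finset.sum_congr rfl fun i _ => ?_
      simp only [Pi.smul_apply, smul_eq_mul]
      exact Real.mul_rpow hd.le (hκ i).le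
    rw [h1, Real.mul_rpow (Real.rpow_nonneg hd.le _) (hSpos κ hκ).le,
      ← Real.rpow_mul hd.le, mul_one_div, div_self hk', Real.rpow_one]
    ring
  · -- strict monotonicity
    intro κ hκ i
    rw [hDf κ hκ i]
    exact mul_pos (mul_pos hcpos (Real.rpow_pos_of_pos (hSpos κ hκ) _))
      (Real.rpow_pos_of_pos (hκ i) _)
  · -- normalization
    rw [hfdef]
    simp only [Real.one_rpow, Finset.sum_const, Finset.card_univ, Fintype.card_fin,
      nsmul_eq_mul, mul_one]
    rw [← Real.rpow_add hn0]
    simp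
  · -- inequality (ii)
    intro κ hκ i j _
    rw [hDf κ hκ i, hDf κ hκ j]
    have hw : 0 < (n : ℝ) ^ (-(1 / k)) * (∑ l, κ l ^ k) ^ (1 / k - 1) :=
      mul_pos hcpos (Real.rpow_pos_of_pos (hSpos κ hκ) _)
    have hki : κ i ^ (k - 1) * κ i = κ i ^ k := by
      nth_rewrite 2 [← Real.rpow_one (κ i)]
      rw [← Real.rpow_add (hκ i)]
      norm_num
    have hkj : κ j ^ (k - 1) * κ j = κ j ^ k := by
      nth_rewrite 2 [← Real.rpow_one (κ j)]
      rw [← Real.rpow_add (hκ j)]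
      norm_num
    have key : 0 ≤ (κ i ^ k - κ j ^ k) * (κ i - κ j) := by
      rcases le_total (κ i) (κ j) with h | h
      · have h2 : κ i ^ k ≤ κ j ^ k := Real.rpow_le_rpow (hκ i).le h hk.le
        nlinarith
      · have h2 : κ j ^ k ≤ κ i ^ k := Real.rpow_le_rpow (hκ j).le h hk.le
        nlinarith
    calc (0:ℝ)
        ≤ ((n : ℝ) ^ (-(1 / k)) * (∑ l, κ l ^ k) ^ (1 / k - 1))
            * ((κ i ^ k - κ j ^ k) * (κ i - κ j)) := mul_nonneg hw.le key
      _ = ((n : ℝ) ^ (-(1 / k)) * (∑ l, κ l ^ k) ^ (1 / k - 1) * κ i ^ (k - 1) * κ i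
            - (n : ℝ) ^ (-(1 / k)) * (∑ l, κ l ^ k) ^ (1 / k - 1) * κ j ^ (k - 1) * κ j)
            * (κ i - κ j) := by
          rw [mul_assoc _ (κ i ^ (k - 1)) (κ i), mul_assoc _ (κ j ^ (k - 1)) (κ j), hki, hkj]
          ring
  · -- inequality (iii)
    intro κ hκ y
    have hκ' : ∀ i, 0 < κ i := hκ
    have hS := hSpos κ hκ'
    have hinner : ∀ i, (∑ j,
        (fderiv ℝ (fun κ' => fderiv ℝ (fun κ'' => Real.log (f κ'')) κ'
          (Pi.single i 1)) κ (Pi.single j 1)) * y i * y j)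
        = (-(k * (((∑ l, κ l ^ k) ^ 2)⁻¹) * (∑ j, κ j ^ (k - 1) * y j)))
            * (κ i ^ (k - 1) * y i)
          + ((k - 1) * (∑ l, κ l ^ k)⁻¹) * (κ i ^ (k - 2) * y i ^ 2) := by
      intro i
      have step : ∀ j,
          (fderiv ℝ (fun κ' => fderiv ℝ (fun κ'' => Real.log (f κ'')) κ'
            (Pi.single i 1)) κ (Pi.single j 1)) * y i * y j
          = (-(k * (((∑ l, κ l ^ k) ^ 2)⁻¹) * (κ i ^ (k - 1) * y i)))
              * (κ j ^ (k - 1) * y j)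
            + (if i = j then ((k - 1) * (∑ l, κ l ^ k)⁻¹) * (κ i ^ (k - 2) * y i ^ 2) else 0) := by
        intro j
        rw [hD2 κ hκ' i j]
        by_cases h : i = j
        · subst h
          rw [if_pos rfl, if_pos rfl]
          ring
        · rw [if_neg h, if_neg h]
          ring
      rw [Finset.sum_congr rfl fun j _ => step j, Finset.sum_add_distrib,
        ← Finset.mul_sum, Finset.sum_ite_eq Finset.univ i
          (fun _ => ((k - 1) * (∑ l, κ l ^ k)⁻¹) * (κ i ^ (k - 2) * y i ^ 2))]
      simp only [Finset.mem_univ, if_true]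
      ring
    have hsum1 : (∑ i, ∑ j,
        (fderiv ℝ (fun κ' => fderiv ℝ (fun κ'' => Real.log (f κ'')) κ'
          (Pi.single i 1)) κ (Pi.single j 1)) * y i * y j)
        = (-(k * (((∑ l, κ l ^ k) ^ 2)⁻¹) * (∑ j, κ j ^ (k - 1) * y j)))
            * (∑ i, κ i ^ (k - 1) * y i)
          + ((k - 1) * (∑ l, κ l ^ k)⁻¹) * (∑ i, κ i ^ (k - 2) * y i ^ 2) := by
      rw [Finset.sum_congr rfl fun i _ => hinner i, Finset.sum_add_distrib,
        ← Finset.mul_sum, ← Finset.mul_sum]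
    have hsum2 : (∑ i, (κ i)⁻¹ *
        fderiv ℝ (fun κ'' => Real.log (f κ'')) κ (Pi.single i 1) * (y i) ^ 2)
        = (∑ l, κ l ^ k)⁻¹ * (∑ i, κ i ^ (k - 2) * y i ^ 2) := by
      rw [Finset.mul_sum]
      refine Finset.sum_congr rfl fun i _ => ?_
      rw [hlog κ hκ' i]
      have h2 : (κ i)⁻¹ * κ i ^ (k - 1) = κ i ^ (k - 2) := by
        rw [← Real.rpow_neg_one (κ i), ← Real.rpow_add (hκ' i),
          show (-1 + (k - 1) : ℝ) = k - 2 by ring]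
      calc (κ i)⁻¹ * (κ i ^ (k - 1) * (∑ l, κ l ^ k)⁻¹) * y i ^ 2
          = ((κ i)⁻¹ * κ i ^ (k - 1)) * ((∑ l, κ l ^ k)⁻¹ * y i ^ 2) := by ring
        _ = (∑ l, κ l ^ k)⁻¹ * (κ i ^ (k - 2) * y i ^ 2) := by rw [h2]; ring
    have hCS : (∑ i, κ i ^ (k - 1) * y i) ^ 2
        ≤ (∑ l, κ l ^ k) * (∑ i, κ i ^ (k - 2) * y i ^ 2) := by
      have h := Finset.sum_mul_sq_le_sq_mul_sq Finset.univ
        (fun i => κ i ^ (k / 2)) (fun i => κ i ^ (k / 2 - 1) * y i)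
      have e1 : ∀ i : Fin n, κ i ^ (k / 2) * (κ i ^ (k / 2 - 1) * y i) = κ i ^ (k - 1) * y i := by
        intro i
        rw [← mul_assoc, ← Real.rpow_add (hκ' i),
          show (k / 2 + (k / 2 - 1) : ℝ) = k - 1 by ring]
      have e2 : ∀ i : Fin n, (κ i ^ (k / 2)) ^ 2 = κ i ^ k := by
        intro i
        rw [sq, ← Real.rpow_add (hκ' i), show (k / 2 + k / 2 : ℝ) = k by ring]
      have e3 : ∀ i : Fin n, (κ i ^ (k / 2 - 1) * y i) ^ 2 = κ i ^ (k - 2) * y i ^ 2 := by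
        intro i
        rw [mul_pow, sq (κ i ^ (k / 2 - 1)), ← Real.rpow_add (hκ' i),
          show (k / 2 - 1 + (k / 2 - 1) : ℝ) = k - 2 by ring]
      rw [Finset.sum_congr rfl fun i _ => e1 i, Finset.sum_congr rfl fun i _ => e2 i,
        Finset.sum_congr rfl fun i _ => e3 i] at h
      exact h
    rw [hsum1, hsum2]
    have key : (-(k * (((∑ l, κ l ^ k) ^ 2)⁻¹) * (∑ j, κ j ^ (k - 1) * y j)))
            * (∑ i, κ i ^ (k - 1) * y i)
          + ((k - 1) * (∑ l, κ l ^ k)⁻¹) * (∑ i, κ i ^ (k - 2) * y i ^ 2)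
          + (∑ l, κ l ^ k)⁻¹ * (∑ i, κ i ^ (k - 2) * y i ^ 2)
        = k * (((∑ l, κ l ^ k) ^ 2)⁻¹)
            * ((∑ l, κ l ^ k) * (∑ i, κ i ^ (k - 2) * y i ^ 2)
              - (∑ i, κ i ^ (k - 1) * y i) ^ 2) := by
      field_simp
      ring
    rw [key]
    exact mul_nonneg (mul_nonneg hk.le (inv_nonneg.2 (sq_nonneg _))) (sub_nonneg.2 hCS)
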